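/- Let C₁, C₂ : S → ℝ be functions with values in [−1,1] on a surface S, and let K₁, K₂ ≤ 0 be real numbers. If at a point one has K + K⊥ ≤ C₁M₁ and K − K⊥ ≤ C₂M₂, where M₁ = ((C₁−C₂)/2)K₁ + ((C₁+C₂)/2)K₂ and M₂ = −((C₁−C₂)/2)K₁ + ((C₁+C₂)/2)K₂, then 2K ≤ ((C₁−C₂)²/2)K₁ + ((C₁+C₂)²/2)K₂ ≤ 0; in particular K ≤ 0. -/
import Mathlib

/-- Pointwise inequality in the non-existence proof for minimal 2-spheres in a
product of negatively curved surfaces. -/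
theorem stmt3 {S : Type*} (C₁ C₂ : S → ℝ)
    (hC1 : ∀ p, C₁ p ∈ Set.Icc (-1 : ℝ) 1) (hC2 : ∀ p, C₂ p ∈ Set.Icc (-1 : ℝ) 1)
    (K₁ K₂ : ℝ) (hK1 : K₁ ≤ 0) (hK2 : K₂ ≤ 0)
    (p : S) (K Kperp M₁ M₂ : ℝ)
    (hM1 : M₁ = (C₁ p - C₂ p) / 2 * K₁ + (C₁ p + C₂ p) / 2 * K₂)
    (hM2 : M₂ = -((C₁ p - C₂ p) / 2) * K₁ + (C₁ p + C₂ p) / 2 * K₂)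
    (h1 : K + Kperp ≤ C₁ p * M₁) (h2 : K - Kperp ≤ C₂ p * M₂) :
    2 * K ≤ (C₁ p - C₂ p) ^ 2 / 2 * K₁ + (C₁ p + C₂ p) ^ 2 / 2 * K₂ ∧
    (C₁ p - C₂ p) ^ 2 / 2 * K₁ + (C₁ p + C₂ p) ^ 2 / 2 * K₂ ≤ 0 ∧ K ≤ 0 := by
  subst hM1 hM2
  have ha : 2 * K ≤ (C₁ p - C₂ p) ^ 2 / 2 * K₁ + (C₁ p + C₂ p) ^ 2 / 2 * K₂ := by nlinarith
  have hb : (C₁ p - C₂ p) ^ 2 / 2 * K₁ + (C₁ p + C₂ p) ^ 2 / 2 * K₂ ≤ 0 := by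
    nlinarith [sq_nonneg (C₁ p - C₂ p), sq_nonneg (C₁ p + C₂ p)]
  exact ⟨ha, hb, by linarith⟩
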